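/- (Generalized Grace theorem) Let D ⊆ ℂ be a circular domain, let q be a monic complex polynomial of degree d ≥ 1, and let f, g be complex polynomials, both of degree exactly n ≥ 1, which are q-apolar. If all zeros of f lie in q_∘(D), then g has at least one zero in q(D). -/

import Mathlib

open Polynomial

/-- The apolarity form `[f,g]_m`. -/
noncomputable def apol (m : ℕ) (f g : Polynomial ℂ) : ℂ :=
  ∑ k ∈ Finset.range (m + 1),
    (-1 : ℂ) ^ k * ((m.choose k : ℂ))⁻¹ * f.coeff k * g.coeff (m - k)

/-- The symmetrization `Sym_N(f)` of a polynomial, as a function on `ι → ℂ`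
with `N = card ι`. -/
noncomputable def symFun {ι : Type*} [Fintype ι] (f : Polynomial ℂ) (y : ι → ℂ) : ℂ :=
  ∑ k ∈ Finset.range (Fintype.card ι + 1),
    (((Fintype.card ι).choose k : ℂ))⁻¹ * f.coeff k *
      MvPolynomial.eval y (MvPolynomial.esymm ι ℂ k)

/-- A circular domain: an open or closed disk or half-plane, or a complement thereof. -/
def IsCircularDomain (D : Set ℂ) : Prop :=
  ∃ (α γ : ℝ) (β : ℂ),
    D = {z : ℂ | α * Complex.normSq z + ((starRingEnd ℂ) β * z).re + γ < 0} ∨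
    D = {z : ℂ | α * Complex.normSq z + ((starRingEnd ℂ) β * z).re + γ ≤ 0}

/-- `q_∘(D) = {u : q⁻¹(u) ⊆ D}`. -/
def innerImage (q : Polynomial ℂ) (D : Set ℂ) : Set ℂ :=
  {u : ℂ | ∀ z : ℂ, q.eval z = u → z ∈ D}

/-- `S_{q,n}(f)(u₁,…,uₙ) = [f∘q, ∏ⱼ (q - uⱼ)]_{nd}`. -/
noncomputable def Sfun (q : Polynomial ℂ) (n : ℕ) (f : Polynomial ℂ) (u : Fin n → ℂ) : ℂ :=
  apol (n * q.natDegree) (f.comp q) (∏ j, (q - Polynomial.C (u j)))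

/-- The Fischer inner product `⟨f,g⟩_n`. -/
noncomputable def fischer (n : ℕ) (f g : Polynomial ℂ) : ℂ :=
  ∑ k ∈ Finset.range (n + 1),
    ((n.choose k : ℂ))⁻¹ * f.coeff k * (starRingEnd ℂ) (g.coeff k)

-- Auxiliary lemmas

lemma choose_inv_e1 (n k : ℕ) (hk : k ≤ n) :
    (((n+1).choose k : ℂ))⁻¹ = ((n : ℂ) + 1)⁻¹ * ((n.choose k : ℂ))⁻¹ * ((n : ℂ) + 1 - k) := by
  have hnat : (n.choose k) * (n + 1) = ((n+1).choose k) * (n + 1 - k) := Nat.choose_mul_succ_eq n k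
  have hcast : ((n + 1 - k : ℕ) : ℂ) = (n : ℂ) + 1 - k := by
    push_cast [Nat.cast_sub (show k ≤ n + 1 by omega)]; ring
  have hc : ((n.choose k : ℂ)) * ((n : ℂ) + 1) = (((n+1).choose k : ℂ)) * ((n : ℂ) + 1 - (k : ℂ)) := by
    rw [← hcast]; exact_mod_cast hnat
  have h1 : ((n.choose k : ℂ)) ≠ 0 := by exact_mod_cast (Nat.choose_pos hk).ne'
  have h2 : (((n+1).choose k : ℂ)) ≠ 0 := by exact_mod_cast (Nat.choose_pos (show k ≤ n+1 by omega)).ne'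
  have h3 : ((n : ℂ) + 1) ≠ 0 := by
    have := Nat.cast_add_one_ne_zero (R := ℂ) n; exact_mod_cast this
  have h4 : ((n : ℂ) + 1 - k) ≠ 0 := by
    rw [← hcast]; exact_mod_cast Nat.sub_ne_zero_of_lt (show k < n + 1 by omega)
  field_simp
  linear_combination hc

lemma choose_inv_e2 (n k : ℕ) (hk : k ≤ n) :
    (((n+1).choose (k+1) : ℂ))⁻¹ = ((n : ℂ) + 1)⁻¹ * ((n.choose k : ℂ))⁻¹ * ((k : ℂ) + 1) := by
  have hnat : (n + 1) * (n.choose k) = ((n+1).choose (k+1)) * (k + 1) := Nat.add_one_mul_choose_eq n k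
  have hc : ((n : ℂ) + 1) * ((n.choose k : ℂ)) = (((n+1).choose (k+1) : ℂ)) * ((k : ℂ) + 1) := by
    exact_mod_cast hnat
  have h1 : ((n.choose k : ℂ)) ≠ 0 := by exact_mod_cast (Nat.choose_pos hk).ne'
  have h2 : (((n+1).choose (k+1) : ℂ)) ≠ 0 := by
    exact_mod_cast (Nat.choose_pos (show k+1 ≤ n+1 by omega)).ne'
  have h3 : ((n : ℂ) + 1) ≠ 0 := by
    have := Nat.cast_add_one_ne_zero (R := ℂ) n; exact_mod_cast this
  have h4 : ((k : ℂ) + 1) ≠ 0 := by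
    have := Nat.cast_add_one_ne_zero (R := ℂ) k; exact_mod_cast this
  field_simp
  linear_combination hc

noncomputable def polarD (n : ℕ) (w : ℂ) (f : Polynomial ℂ) : Polynomial ℂ :=
  C (n : ℂ) * f + (C w - X) * derivative f

lemma polarD_coeff (n : ℕ) (w : ℂ) (f : Polynomial ℂ) (k : ℕ) :
    (polarD n w f).coeff k
      = ((n : ℂ) - k) * f.coeff k + ((k : ℂ) + 1) * w * f.coeff (k + 1) := by
  unfold polarD
  rw [coeff_add, coeff_C_mul, sub_mul, coeff_sub, coeff_C_mul, coeff_derivative]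
  cases k with
  | zero => simp
  | succ m =>
      rw [coeff_X_mul, coeff_derivative]
      push_cast
      ring

lemma polarD_natDegree_le (n : ℕ) (w : ℂ) (f : Polynomial ℂ) (hf : f.natDegree ≤ n + 1) :
    (polarD (n + 1) w f).natDegree ≤ n := by
  rw [natDegree_le_iff_coeff_eq_zero]
  intro m hm
  rw [polarD_coeff]
  rcases eq_or_lt_of_le (show n + 1 ≤ m by omega) with h | h
  · subst h
    have h2 : f.coeff (n + 1 + 1) = 0 := coeff_eq_zero_of_natDegree_lt (by omega)
    rw [h2]
    push_cast
    ring
  · have h1 : f.coeff m = 0 := coeff_eq_zero_of_natDegree_lt (by omega)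
    have h2 : f.coeff (m + 1) = 0 := coeff_eq_zero_of_natDegree_lt (by omega)
    rw [h1, h2]
    ring

lemma apol_C_mul (m : ℕ) (f g : Polynomial ℂ) (b : ℂ) :
    apol m f (C b * g) = b * apol m f g := by
  unfold apol
  rw [Finset.mul_sum]
  refine Finset.sum_congr rfl fun k _ => ?_
  rw [coeff_C_mul]; ring

lemma apol_eval (n : ℕ) (f : Polynomial ℂ) (c : ℂ) (hf : f.natDegree ≤ n) :
    apol n f ((X - C c) ^ n) = f.eval c := by
  unfold apol
  rw [eval_eq_sum_range' (lt_of_le_of_lt hf (Nat.lt_succ_self n))]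
  refine Finset.sum_congr rfl fun k hk => ?_
  rw [Finset.mem_range, Nat.lt_succ_iff] at hk
  have h2 : (X - C c : Polynomial ℂ) = X + C (-c) := by rw [map_neg]; ring
  rw [h2, coeff_X_add_C_pow]
  have h1 : n - (n - k) = k := Nat.sub_sub_self hk
  rw [h1, Nat.choose_symm hk]
  have h3 : (n.choose k : ℂ) ≠ 0 := by
    exact_mod_cast Nat.choose_pos hk |>.ne'
  field_simp
  have : ((-1:ℂ))^k * (-c)^k = c^k := by
    rw [← mul_pow]; ring_nf
  calc (-1:ℂ) ^ k * f.coeff k * (-c) ^ k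
      = ((-1:ℂ)^k * (-c)^k) * f.coeff k := by ring
    _ = f.coeff k * c ^ k := by rw [this]; ring

lemma apol_step (n : ℕ) (f h : Polynomial ℂ) (w : ℂ) (hh : h.natDegree ≤ n) :
    apol (n + 1) f ((X - C w) * h)
      = ((n : ℂ) + 1)⁻¹ * apol n (polarD (n + 1) w f) h := by
  unfold apol
  -- LHS
  have coeff_lin : ∀ m : ℕ, ((X - C w) * h).coeff m = (X * h).coeff m - w * h.coeff m := by
    intro m
    rw [sub_mul, coeff_sub, coeff_C_mul]
  simp only [coeff_lin]
  have lhs_split :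
      ∑ k ∈ Finset.range (n + 1 + 1),
        (-1 : ℂ) ^ k * (((n+1).choose k : ℂ))⁻¹ * f.coeff k *
          ((X * h).coeff (n + 1 - k) - w * h.coeff (n + 1 - k))
      = (∑ k ∈ Finset.range (n + 1 + 1),
          (-1 : ℂ) ^ k * (((n+1).choose k : ℂ))⁻¹ * f.coeff k * (X * h).coeff (n + 1 - k))
        - w * ∑ k ∈ Finset.range (n + 1 + 1),
          (-1 : ℂ) ^ k * (((n+1).choose k : ℂ))⁻¹ * f.coeff k * h.coeff (n + 1 - k) := by
    rw [Finset.mul_sum, ← Finset.sum_sub_distrib]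
    refine Finset.sum_congr rfl fun k _ => ?_
    ring
  rw [lhs_split]
  -- first sum: last term vanishes, reindex
  have first_sum :
      (∑ k ∈ Finset.range (n + 1 + 1),
          (-1 : ℂ) ^ k * (((n+1).choose k : ℂ))⁻¹ * f.coeff k * (X * h).coeff (n + 1 - k))
      = ∑ k ∈ Finset.range (n + 1),
          (-1 : ℂ) ^ k * (((n+1).choose k : ℂ))⁻¹ * f.coeff k * h.coeff (n - k) := by
    rw [Finset.sum_range_succ]
    have : (n + 1) - (n + 1) = 0 := by omega
    rw [this]
    have hX0 : ((X : Polynomial ℂ) * h).coeff 0 = 0 := by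
      rw [mul_coeff_zero, coeff_X_zero, zero_mul]
    rw [hX0, mul_zero, add_zero]
    refine Finset.sum_congr rfl fun k hk => ?_
    rw [Finset.mem_range] at hk
    have : n + 1 - k = (n - k) + 1 := by omega
    rw [this, coeff_X_mul]
  rw [first_sum]
  -- second sum: shift index
  have second_sum :
      (∑ k ∈ Finset.range (n + 1 + 1),
          (-1 : ℂ) ^ k * (((n+1).choose k : ℂ))⁻¹ * f.coeff k * h.coeff (n + 1 - k))
      = ∑ k ∈ Finset.range (n + 1),
          (-1 : ℂ) ^ (k+1) * (((n+1).choose (k+1) : ℂ))⁻¹ * f.coeff (k+1) * h.coeff (n - k) := by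
    rw [Finset.sum_range_succ']
    have h0 : h.coeff (n + 1 - 0) = 0 := by
      rw [Nat.sub_zero]
      exact coeff_eq_zero_of_natDegree_lt (by omega)
    rw [h0]
    simp only [mul_zero, add_zero]
    refine Finset.sum_congr rfl fun k hk => ?_
    rw [Finset.mem_range] at hk
    have : n + 1 - (k + 1) = n - k := by omega
    rw [this]
  rw [second_sum]
  -- RHS
  rw [eq_comm, ← sub_eq_zero]
  simp only [Finset.mul_sum]
  rw [← Finset.sum_sub_distrib, ← Finset.sum_sub_distrib]
  refine Finset.sum_eq_zero fun k hk => ?_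
  rw [Finset.mem_range] at hk
  have hk' : k ≤ n := by omega
  rw [polarD_coeff]
  rw [choose_inv_e1 n k hk', choose_inv_e2 n k hk']
  push_cast
  ring

lemma logderiv (M : Multiset ℂ) (ζ : ℂ) (hz : ∀ r ∈ M, ζ ≠ r) :
    eval ζ (derivative (M.map (fun a => X - C a)).prod)
      = eval ζ ((M.map (fun a => X - C a)).prod) * (M.map (fun r => (ζ - r)⁻¹)).sum := by
  induction M using Multiset.induction with
  | empty => simp
  | cons a M ih =>
      have ha : ζ - a ≠ 0 := sub_ne_zero.2 (hz a (Multiset.mem_cons_self a M))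
      have ih' := ih (fun r hr => hz r (Multiset.mem_cons_of_mem hr))
      simp only [Multiset.map_cons, Multiset.prod_cons, Multiset.sum_cons]
      rw [derivative_mul, eval_add, eval_mul, eval_mul, ih']
      simp only [derivative_sub, derivative_X, derivative_C, sub_zero, eval_one, eval_sub,
        eval_X, eval_C]
      field_simp
      simp only [eval_sub, eval_mul, eval_X, eval_C]
      ring

lemma cs_multiset (M : Multiset ℂ) :
    Complex.normSq M.sum ≤ M.card * (M.map Complex.normSq).sum := by
  induction M using Multiset.induction with
  | empty => simp
  | cons a M ih =>
      simp only [Multiset.sum_cons, Multiset.map_cons, Multiset.card_cons]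
      have key : 2 * ((starRingEnd ℂ) a * M.sum).re ≤ (M.map Complex.normSq).sum + M.card * Complex.normSq a := by
        have pointwise : ∀ s ∈ M, 2 * ((starRingEnd ℂ) a * s).re ≤ Complex.normSq s + Complex.normSq a := by
          intro s _
          have h0 : 0 ≤ Complex.normSq (s - a) := Complex.normSq_nonneg _
          rw [Complex.normSq_sub] at h0
          have : (s * (starRingEnd ℂ) a).re = ((starRingEnd ℂ) a * s).re := by rw [mul_comm]
          linarith [h0, this ▸ h0]
        have hre : ((starRingEnd ℂ) a * M.sum).re = (M.map (fun s => ((starRingEnd ℂ) a * s).re)).sum := by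
          have h1 : (starRingEnd ℂ) a * M.sum = (M.map (fun s => (starRingEnd ℂ) a * s)).sum := by
            rw [Multiset.sum_map_mul_left, Multiset.map_id']
          rw [h1, ← Complex.coe_reAddGroupHom, map_multiset_sum, Multiset.map_map]
          rfl
        have hsum : (M.map (fun s => 2 * ((starRingEnd ℂ) a * s).re)).sum
            ≤ (M.map (fun s => Complex.normSq s + Complex.normSq a)).sum :=
          Multiset.sum_map_le_sum_map _ _ pointwise
        rw [Multiset.sum_map_add] at hsum
        have h2 : (M.map (fun s => 2 * ((starRingEnd ℂ) a * s).re)).sum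
            = 2 * (M.map (fun s => ((starRingEnd ℂ) a * s).re)).sum := by
          rw [← Multiset.sum_map_mul_left]
        have h3 : (M.map (fun _ => Complex.normSq a)).sum = (M.card : ℝ) * Complex.normSq a := by
          rw [Multiset.map_const', Multiset.sum_replicate, nsmul_eq_mul]
        rw [h2, h3] at hsum
        rw [hre]
        linarith
      have expand : Complex.normSq (a + M.sum)
          = Complex.normSq a + 2 * ((starRingEnd ℂ) a * M.sum).re + Complex.normSq M.sum := by
        have hconj : (a * (starRingEnd ℂ) M.sum).re = ((starRingEnd ℂ) a * M.sum).re := by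
          calc (a * (starRingEnd ℂ) M.sum).re
              = ((starRingEnd ℂ) (a * (starRingEnd ℂ) M.sum)).re := (Complex.conj_re _).symm
            _ = ((starRingEnd ℂ) a * M.sum).re := by rw [map_mul, Complex.conj_conj]
        rw [Complex.normSq_add, hconj]
        ring
      push_cast
      nlinarith [Complex.normSq_nonneg a, ih]

lemma inv_identity (α γ : ℝ) (β ζ z : ℂ) (hz : z ≠ ζ) :
    (α * Complex.normSq z + ((starRingEnd ℂ) β * z).re + γ) * Complex.normSq ((ζ - z)⁻¹)
      = (α * Complex.normSq ζ + ((starRingEnd ℂ) β * ζ).re + γ) * Complex.normSq ((ζ - z)⁻¹)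
        + ((starRingEnd ℂ) (-2*(α:ℂ)*((starRingEnd ℂ) ζ) - (starRingEnd ℂ) β) * (ζ - z)⁻¹).re
        + α := by
  have hu : ζ - z ≠ 0 := sub_ne_zero.2 (Ne.symm hz)
  have hns : Complex.normSq (ζ - z) ≠ 0 := (Complex.normSq_pos.2 hu).ne'
  have key : (α * Complex.normSq z + ((starRingEnd ℂ) β * z).re + γ)
      = (α * Complex.normSq ζ + ((starRingEnd ℂ) β * ζ).re + γ)
        + ((starRingEnd ℂ) (-2*(α:ℂ)*((starRingEnd ℂ) ζ) - (starRingEnd ℂ) β)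
            * (starRingEnd ℂ) (ζ - z)).re
        + α * Complex.normSq (ζ - z) := by
    simp only [map_sub, map_mul, map_neg, map_ofNat, Complex.conj_conj, Complex.normSq_apply,
      Complex.mul_re, Complex.sub_re, Complex.sub_im, Complex.conj_re, Complex.conj_im,
      Complex.neg_re, Complex.neg_im, Complex.ofReal_re, Complex.ofReal_im,
      Complex.re_ofNat, Complex.im_ofNat, Complex.mul_im]
    ring
  have e1 : ((starRingEnd ℂ) (-2*(α:ℂ)*((starRingEnd ℂ) ζ) - (starRingEnd ℂ) β) * (ζ - z)⁻¹).re
      = (Complex.normSq (ζ - z))⁻¹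
        * ((starRingEnd ℂ) (-2*(α:ℂ)*((starRingEnd ℂ) ζ) - (starRingEnd ℂ) β)
            * (starRingEnd ℂ) (ζ - z)).re := by
    have : ((ζ - z)⁻¹).re = (ζ-z).re / Complex.normSq (ζ-z) ∧
        ((ζ - z)⁻¹).im = -(ζ-z).im / Complex.normSq (ζ-z) :=
      ⟨Complex.inv_re _, Complex.inv_im _⟩
    rw [Complex.mul_re, this.1, this.2, Complex.mul_re, Complex.conj_re, Complex.conj_im]
    field_simp
    rw [Complex.conj_re, Complex.conj_im]
    ring
  rw [e1, Complex.normSq_inv, key]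
  field_simp

lemma re_sum_multiset (B : ℂ) (M : Multiset ℂ) :
    ((starRingEnd ℂ) B * M.sum).re = (M.map (fun s => ((starRingEnd ℂ) B * s).re)).sum := by
  have h1 : (starRingEnd ℂ) B * M.sum = (M.map (fun s => (starRingEnd ℂ) B * s)).sum := by
    rw [Multiset.sum_map_mul_left, Multiset.map_id']
  rw [h1, ← Complex.coe_reAddGroupHom, map_multiset_sum, Multiset.map_map]
  rfl

lemma center (pz A : ℝ) (hpz : 0 ≤ pz) (B : ℂ) (M : Multiset ℂ) (t : ℂ)
    (ht : (M.card : ℂ) * t = M.sum) :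
    (pz * Complex.normSq t + ((starRingEnd ℂ) B * t).re + A) * M.card
      ≤ (M.map (fun s => pz * Complex.normSq s + ((starRingEnd ℂ) B * s).re + A)).sum := by
  rcases eq_or_ne M 0 with rfl | hM0
  · simp
  have hcard : 0 < (M.card : ℝ) := by exact_mod_cast Multiset.card_pos.2 hM0
  have hdecomp : (M.map (fun s => pz * Complex.normSq s + ((starRingEnd ℂ) B * s).re + A)).sum
      = pz * (M.map Complex.normSq).sum + ((starRingEnd ℂ) B * M.sum).re + M.card * A := by
    have e : (fun s : ℂ => pz * Complex.normSq s + ((starRingEnd ℂ) B * s).re + A)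
        = fun s : ℂ => (pz * Complex.normSq s + ((starRingEnd ℂ) B * s).re) + (fun _ : ℂ => A) s := rfl
    rw [e, Multiset.sum_map_add, Multiset.sum_map_add]
    rw [re_sum_multiset]
    have e2 : (M.map (fun s => pz * Complex.normSq s)).sum = pz * (M.map Complex.normSq).sum := by
      rw [← Multiset.sum_map_mul_left]
    have e3 : (M.map (fun _ : ℂ => A)).sum = (M.card : ℝ) * A := by
      rw [Multiset.map_const', Multiset.sum_replicate, nsmul_eq_mul]
    rw [e2, e3]
  rw [hdecomp]
  have h1 : ((starRingEnd ℂ) B * M.sum).re = (M.card : ℝ) * ((starRingEnd ℂ) B * t).re := by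
    rw [← ht, mul_comm ((M.card : ℂ)) t, ← mul_assoc]
    have : ((M.card : ℕ) : ℂ) = (((M.card : ℝ)) : ℂ) := by push_cast; rfl
    rw [this, mul_comm ((starRingEnd ℂ) B * t) _, Complex.re_ofReal_mul]
  have h2 : Complex.normSq M.sum = (M.card : ℝ) ^ 2 * Complex.normSq t := by
    rw [← ht, Complex.normSq_mul]
    have : ((M.card : ℕ) : ℂ) = (((M.card : ℝ)) : ℂ) := by push_cast; rfl
    rw [this, Complex.normSq_ofReal]
    ring
  have hcs := cs_multiset M
  rw [h2] at hcs
  have h3 : (M.card : ℝ) * Complex.normSq t ≤ (M.map Complex.normSq).sum := by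
    nlinarith
  rw [h1]
  nlinarith

lemma laguerre (α γ : ℝ) (β : ℂ) (D : Set ℂ)
    (hDcase : D = {z : ℂ | α * Complex.normSq z + ((starRingEnd ℂ) β * z).re + γ < 0} ∨
      D = {z : ℂ | α * Complex.normSq z + ((starRingEnd ℂ) β * z).re + γ ≤ 0})
    (n : ℕ) (hn : 1 ≤ n) (f : Polynomial ℂ) (hf0 : f ≠ 0) (hdeg : f.natDegree = n)
    (hroots : ∀ z : ℂ, f.IsRoot z → z ∈ D) (w : ℂ) (hw : w ∉ D)
    (ζ : ℂ) (hev : (polarD n w f).eval ζ = 0) : ζ ∈ D := by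
  by_contra hζ
  set p : ℂ → ℝ := fun z => α * Complex.normSq z + ((starRingEnd ℂ) β * z).re + γ with hp
  -- basic root structure
  have hcard : f.roots.card = f.natDegree :=
    (Polynomial.splits_iff_card_roots).1 (IsAlgClosed.splits f)
  set M := f.roots with hM
  set P := (M.map (fun a => X - C a)).prod with hP
  have hsplit : C f.leadingCoeff * P = f :=
    Polynomial.C_leadingCoeff_mul_prod_multiset_X_sub_C hcard
  have ha : f.leadingCoeff ≠ 0 := leadingCoeff_ne_zero.2 hf0
  have hrD : ∀ r ∈ M, r ∈ D := fun r hr => hroots r (isRoot_of_mem_roots hr)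
  have hrζ : ∀ r ∈ M, ζ ≠ r := fun r hr h => hζ (h ▸ hrD r hr)
  have hPζ : eval ζ P ≠ 0 := by
    rw [hP, eval_multiset_prod]
    apply Multiset.prod_ne_zero
    intro h0
    rw [Multiset.mem_map] at h0
    obtain ⟨g, hg, hg0⟩ := h0
    rw [Multiset.mem_map] at hg
    obtain ⟨r, hr, rfl⟩ := hg
    simp only [eval_sub, eval_X, eval_C] at hg0
    exact sub_ne_zero.2 (hrζ r hr) hg0
  have hfζ : eval ζ f ≠ 0 := by
    rw [← hsplit, eval_mul, eval_C]
    exact mul_ne_zero ha hPζ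
  have hwζ : w ≠ ζ := by
    intro h
    subst h
    unfold polarD at hev
    simp only [eval_add, eval_mul, eval_C, eval_sub, eval_X, sub_self, zero_mul,
      add_zero] at hev
    have hn0 : ((n : ℂ)) ≠ 0 := by
      have : n ≠ 0 := by omega
      exact_mod_cast this
    exact hfζ (by
      rcases mul_eq_zero.1 hev with h | h
      · exact absurd h hn0
      · exact h)
  -- derive the sum identity
  have hder : eval ζ (derivative f) = eval ζ f * (M.map (fun r => (ζ - r)⁻¹)).sum := by
    conv_lhs => rw [← hsplit]
    conv_rhs => rw [← hsplit]
    rw [derivative_mul, derivative_C, zero_mul, zero_add, eval_mul, eval_C,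
      logderiv M ζ hrζ, eval_mul, eval_C]
    ring
  -- evaluate polarD
  have hev2 : (n : ℂ) * eval ζ f + (w - ζ) * eval ζ (derivative f) = 0 := by
    unfold polarD at hev
    simp only [eval_add, eval_mul, eval_C, eval_sub, eval_X] at hev
    linear_combination hev
  have hwζ' : ζ - w ≠ 0 := sub_ne_zero.2 (Ne.symm hwζ)
  set S := (M.map (fun r => (ζ - r)⁻¹)).sum with hS
  have hkey : (n : ℂ) + (w - ζ) * S = 0 := by
    rw [hder] at hev2
    have h2 : eval ζ f * ((n : ℂ) + (w - ζ) * S) = 0 := by linear_combination hev2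
    rcases mul_eq_zero.1 h2 with h | h
    · exact absurd h hfζ
    · exact h
  have hteq : ((M.card : ℕ) : ℂ) * (ζ - w)⁻¹ = S := by
    rw [hM, hcard, hdeg]
    field_simp
    linear_combination hkey
  -- now the geometric part
  set B : ℂ := -2*(α:ℂ)*((starRingEnd ℂ) ζ) - (starRingEnd ℂ) β with hB
  set T : ℂ → ℂ := fun r => (ζ - r)⁻¹ with hT
  set t : ℂ := (ζ - w)⁻¹ with ht
  set φ : ℂ → ℝ := fun s => p ζ * Complex.normSq s + ((starRingEnd ℂ) B * s).re + α with hφ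
  have hMn : M.card = n := by rw [hM, hcard, hdeg]
  have hM0 : M ≠ 0 := by
    intro h0
    rw [h0] at hMn
    simp at hMn
    omega
  set M' : Multiset ℂ := M.map T with hM'
  have hcardM' : M'.card = n := by rw [hM', Multiset.card_map, hMn]
  have htsum : ((M'.card : ℕ) : ℂ) * t = M'.sum := by
    rw [hcardM', hM']
    have : (Multiset.map T M).sum = S := by rw [hS]
    rw [this, ← hteq, hMn]
  have hφr : ∀ r ∈ M, φ (T r) = p r * Complex.normSq (T r) := by
    intro r hr
    have := inv_identity α γ β ζ r (fun h => (hrζ r hr) h.symm)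
    rw [hφ, hp]
    simp only []
    rw [hT]
    linarith [this]
  have hφw : φ t = p w * Complex.normSq t := by
    have := inv_identity α γ β ζ w hwζ
    rw [hφ, hp]
    simp only []
    rw [ht]
    linarith [this]
  have hTne : ∀ r ∈ M, T r ≠ 0 := fun r hr => inv_ne_zero (sub_ne_zero.2 (hrζ r hr))
  have htne : t ≠ 0 := inv_ne_zero hwζ'
  have hpζ : 0 ≤ p ζ := by
    rcases hDcase with hDeq | hDeq
    · rw [hDeq] at hζ
      simp only [Set.mem_setOf_eq, not_lt] at hζ
      exact hζ
    · rw [hDeq] at hζ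
      simp only [Set.mem_setOf_eq, not_le] at hζ
      exact le_of_lt hζ
  have hcenter : φ t * (M'.card : ℝ) ≤ (M'.map φ).sum :=
    center (p ζ) α hpζ B M' t htsum
  have hcard1 : (1 : ℝ) ≤ (M'.card : ℝ) := by
    rw [hcardM']
    exact_mod_cast hn
  have hsum_map : (M'.map φ).sum = (M.map (fun r => φ (T r))).sum := by
    rw [hM', Multiset.map_map]
    rfl
  rcases hDcase with hDeq | hDeq
  · -- open case
    have hζ' : ¬ (ζ ∈ D) := hζ
    have hwp : 0 ≤ p w := by
      rw [hDeq] at hw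
      simp only [Set.mem_setOf_eq, not_lt] at hw
      exact hw
    have hrp : ∀ r ∈ M, p r < 0 := by
      intro r hr
      have := hrD r hr
      rw [hDeq] at this
      exact this
    have hφt : 0 ≤ φ t := by
      rw [hφw]
      exact mul_nonneg hwp (Complex.normSq_nonneg t)
    have hφrneg : ∀ r ∈ M, φ (T r) < 0 := by
      intro r hr
      rw [hφr r hr]
      exact mul_neg_of_neg_of_pos (hrp r hr) (Complex.normSq_pos.2 (hTne r hr))
    -- sum is strictly negative
    obtain ⟨r₀, hr₀⟩ := Multiset.exists_mem_of_ne_zero hM0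
    obtain ⟨M₀, hM₀⟩ := Multiset.exists_cons_of_mem hr₀
    have hsum_neg : (M'.map φ).sum < 0 := by
      rw [hsum_map, hM₀, Multiset.map_cons, Multiset.sum_cons]
      have h1 : φ (T r₀) < 0 := hφrneg r₀ hr₀
      have h2 : (M₀.map (fun r => φ (T r))).sum ≤ (M₀.map (fun _ => (0:ℝ))).sum :=
        Multiset.sum_map_le_sum_map _ _ (fun r hr =>
          le_of_lt (hφrneg r (by rw [hM₀]; exact Multiset.mem_cons_of_mem hr)))
      have h3 : (M₀.map (fun _ : ℂ => (0:ℝ))).sum = 0 := by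
        rw [Multiset.map_const', Multiset.sum_replicate, smul_zero]
      linarith
    nlinarith [hcenter, hφt, hsum_neg, hcard1]
  · -- closed case
    have hwp : 0 < p w := by
      rw [hDeq] at hw
      simp only [Set.mem_setOf_eq, not_le] at hw
      exact hw
    have hrp : ∀ r ∈ M, p r ≤ 0 := by
      intro r hr
      have := hrD r hr
      rw [hDeq] at this
      exact this
    have hφt : 0 < φ t := by
      rw [hφw]
      exact mul_pos hwp (Complex.normSq_pos.2 htne)
    have hφrneg : ∀ r ∈ M, φ (T r) ≤ 0 := by
      intro r hr
      rw [hφr r hr]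
      exact mul_nonpos_iff.2 (Or.inr ⟨hrp r hr, Complex.normSq_nonneg _⟩)
    have hsum_neg : (M'.map φ).sum ≤ 0 := by
      rw [hsum_map]
      have h2 : (M.map (fun r => φ (T r))).sum ≤ (M.map (fun _ => (0:ℝ))).sum :=
        Multiset.sum_map_le_sum_map _ _ (fun r hr => hφrneg r hr)
      have h3 : (M.map (fun _ : ℂ => (0:ℝ))).sum = 0 := by
        rw [Multiset.map_const', Multiset.sum_replicate, smul_zero]
      linarith
    nlinarith [hcenter, hφt, hsum_neg, hcard1]

lemma grace_core (D : Set ℂ) (hD : IsCircularDomain D) :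
    ∀ (n : ℕ) (f : Polynomial ℂ) (W : Multiset ℂ), f ≠ 0 → f.natDegree = n →
      (∀ z : ℂ, f.IsRoot z → z ∈ D) → W.card = n → (∀ w ∈ W, w ∉ D) →
      apol n f ((W.map fun w => X - C w).prod) ≠ 0 := by
  obtain ⟨α, γ, β, hDcase⟩ := hD
  intro n
  induction n with
  | zero =>
      intro f W hf0 hdeg _ hWcard _
      have hW0 : W = 0 := Multiset.card_eq_zero.1 hWcard
      subst hW0
      simp only [Multiset.map_zero, Multiset.prod_zero]
      have he : apol 0 f 1 = f.coeff 0 := by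
        unfold apol
        simp
      rw [he]
      intro h0
      apply hf0
      have := Polynomial.eq_C_of_natDegree_eq_zero hdeg
      rw [this, h0, map_zero]
  | succ n IH =>
      intro f W hf0 hdeg hroots hWcard hWout
      have hfl : f.coeff (n + 1) ≠ 0 := by
        have h1 : f.leadingCoeff ≠ 0 := leadingCoeff_ne_zero.2 hf0
        rwa [leadingCoeff, hdeg] at h1
      by_cases hc : ∀ w ∈ W, f.coeff n + ((n : ℂ) + 1) * w * f.coeff (n + 1) = 0
      · -- all roots of the "g"-side equal the centroid
        set c : ℂ := -f.coeff n / (((n : ℂ) + 1) * f.coeff (n + 1)) with hcdef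
        have hn1 : ((n : ℂ) + 1) ≠ 0 := by
          have := Nat.cast_add_one_ne_zero (R := ℂ) n
          exact_mod_cast this
        have hWc : ∀ w ∈ W, w = c := by
          intro w hw
          have h := hc w hw
          rw [hcdef]
          field_simp
          linear_combination h
        have hWrep : W = Multiset.replicate (n + 1) c :=
          Multiset.eq_replicate.2 ⟨hWcard, hWc⟩
        rw [hWrep, Multiset.map_replicate, Multiset.prod_replicate]
        rw [apol_eval (n + 1) f c (le_of_eq hdeg)]
        have hcW : c ∈ W := by
          have : 0 < W.card := by omega
          obtain ⟨w, hw⟩ := Multiset.card_pos_iff_exists_mem.1 this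
          exact (hWc w hw) ▸ hw
        have hcD : c ∉ D := hWout c hcW
        intro h0
        exact hcD (hroots c h0)
      · push_neg at hc
        obtain ⟨w, hwW, hne⟩ := hc
        obtain ⟨W', hW'⟩ := Multiset.exists_cons_of_mem hwW
        have hW'card : W'.card = n := by
          have := hWcard
          rw [hW', Multiset.card_cons] at this
          omega
        set h : Polynomial ℂ := (W'.map fun w => X - C w).prod with hh
        have hhdeg : h.natDegree = n := by
          rw [hh, natDegree_multiset_prod_X_sub_C_eq_card, hW'card]
        set g1 := polarD (n + 1) w f with hg1
        have hg1coeff : g1.coeff n ≠ 0 := by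
          rw [hg1, polarD_coeff]
          have e : ((n + 1 : ℕ) : ℂ) - (n : ℂ) = 1 := by push_cast; ring
          rw [e, one_mul]
          exact fun h0 => hne (by linear_combination h0)
        have hg1ne : g1 ≠ 0 := fun h0 => hg1coeff (by rw [h0, coeff_zero])
        have hg1deg : g1.natDegree = n :=
          le_antisymm (polarD_natDegree_le n w f (le_of_eq hdeg))
            (le_natDegree_of_ne_zero hg1coeff)
        have hg1roots : ∀ z : ℂ, g1.IsRoot z → z ∈ D := by
          intro z hz
          exact laguerre α γ β D hDcase (n + 1) (by omega) f hf0 hdeg hroots w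
            (hWout w hwW) z hz
        have hW'out : ∀ v ∈ W', v ∉ D := by
          intro v hv
          exact hWout v (by rw [hW']; exact Multiset.mem_cons_of_mem hv)
        have hIH := IH g1 W' hg1ne hg1deg hg1roots hW'card hW'out
        rw [hW', Multiset.map_cons, Multiset.prod_cons]
        rw [apol_step n f h w (le_of_eq hhdeg)]
        have hn1 : (((n : ℂ)) + 1)⁻¹ ≠ 0 := by
          apply inv_ne_zero
          have := Nat.cast_add_one_ne_zero (R := ℂ) n
          exact_mod_cast this
        exact mul_ne_zero hn1 hIH

/-- Generalized Grace theorem. -/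
theorem stmt_9 (D : Set ℂ) (hD : IsCircularDomain D)
    (d : ℕ) (hd : 1 ≤ d) (q : Polynomial ℂ) (hq : q.Monic) (hqd : q.natDegree = d)
    (n : ℕ) (hn : 1 ≤ n)
    (f g : Polynomial ℂ) (hf : f.natDegree = n) (hg : g.natDegree = n)
    (hap : apol (n * d) (f.comp q) (g.comp q) = 0)
    (hroots : ∀ z : ℂ, f.IsRoot z → z ∈ innerImage q D) :
    ∃ u ∈ (fun z => q.eval z) '' D, g.IsRoot u := by
  by_contra hcon
  push_neg at hcon
  set N := n * d with hN
  set F := f.comp q with hF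
  set G := g.comp q with hG
  have hFdeg : F.natDegree = N := by
    rw [hF, natDegree_comp, hf, hqd]
  have hGdeg : G.natDegree = N := by
    rw [hG, natDegree_comp, hg, hqd]
  have hN1 : 1 ≤ N := by
    rw [hN]; exact Nat.one_le_iff_ne_zero.2 (by positivity)
  have hFne : F ≠ 0 := by
    intro h0
    rw [h0, natDegree_zero] at hFdeg
    omega
  have hGne : G ≠ 0 := by
    intro h0
    rw [h0, natDegree_zero] at hGdeg
    omega
  have hGcard : G.roots.card = G.natDegree :=
    (Polynomial.splits_iff_card_roots).1 (IsAlgClosed.splits G)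
  have hsplit : C G.leadingCoeff * (G.roots.map fun a => X - C a).prod = G :=
    Polynomial.C_leadingCoeff_mul_prod_multiset_X_sub_C hGcard
  have hb : G.leadingCoeff ≠ 0 := leadingCoeff_ne_zero.2 hGne
  -- roots of F lie in D
  have hFroots : ∀ z : ℂ, F.IsRoot z → z ∈ D := by
    intro z hz
    rw [IsRoot, hF, eval_comp] at hz
    exact hroots (q.eval z) hz z rfl
  -- roots of G avoid D
  have hGroots : ∀ w ∈ G.roots, w ∉ D := by
    intro w hw hwD
    have hzero : g.eval (q.eval w) = 0 := by
      have := isRoot_of_mem_roots hw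
      rwa [IsRoot, hG, eval_comp] at this
    exact (hcon (q.eval w) ⟨w, hwD, rfl⟩) hzero
  have hmain := grace_core D hD N F G.roots hFne hFdeg hFroots (by rw [hGcard, hGdeg]) hGroots
  apply hmain
  have : apol N F G = 0 := hap
  rw [← hsplit, apol_C_mul] at this
  rcases mul_eq_zero.1 this with h | h
  · exact absurd h hb
  · exact h
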